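/- Let δ = ±1, let k₀, k₁, k₂ ∈ ℝ \ {0}, k₃ ∈ ℝ, let η ∈ ℝ with η ≠ 0, and let q : ℝ² → ℝ be a smooth function of (u_x, v_x) with k₂·q_{v_x} − k₁·q_{u_x} ≠ 0 everywhere. Let u, v : U → ℝ be smooth functions on an open set U ⊆ ℝ² satisfying on U: u_{xt} = (k₀/(k₂q_{v_x} − k₁q_{u_x}))·[ q_{v_x} + (k₁v + k₂u + k₃)(δk₁(k₁v_x + k₂u_x) − q·q_{v_x}) ], v_{xt} = (−k₀/(k₂q_{v_x} − k₁q_{u_x}))·[ q_{u_x} + (k₁v + k₂u + k₃)(δk₂(k₁v_x + k₂u_x) − q·q_{u_x}) ], where q and its partial derivatives are evaluated at (u_x, v_x). Define F₁₁ = η(k₁v_x + k₂u_x), F₁₂ = 0, F₂₁ = η², F₂₂ = k₀(k₁v + k₂u) + k₀k₃, F₃₁ = η·q(u_x, v_x), F₃₂ = k₀/η. Then on U the structure equations hold: −∂_t F₁₁ + ∂_x F₁₂ = F₃₁F₂₂ − F₃₂F₂₁, −∂_t F₂₁ + ∂_x F₂₂ = F₁₁F₃₂ − F₁₂F₃₁,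 −∂_t F₃₁ + ∂_x F₃₂ = δ(F₁₁F₂₂ − F₁₂F₂₁); hence this family of systems describes pseudospherical surfaces (δ = 1), resp. spherical surfaces (δ = −1), with these associated functions. -/

import Mathlib

open Real

/-- Partial derivative in the `x` direction of a function on the `(x, t)` plane. -/
noncomputable def pdx (f : ℝ × ℝ → ℝ) (p : ℝ × ℝ) : ℝ := fderiv ℝ f p (1, 0)

/-- Partial derivative in the `t` direction of a function on the `(x, t)` plane. -/
noncomputable def pdt (f : ℝ × ℝ → ℝ) (p : ℝ × ℝ) : ℝ := fderiv ℝ f p (0, 1)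

/-- The structure equations of a surface of constant Gaussian curvature `-δ`. -/
def StructEqs (δ : ℝ) (U : Set (ℝ × ℝ)) (F11 F12 F21 F22 F31 F32 : ℝ × ℝ → ℝ) : Prop :=
  ∀ p ∈ U,
    -(pdt F11 p) + pdx F12 p = F31 p * F22 p - F32 p * F21 p ∧
    -(pdt F21 p) + pdx F22 p = F11 p * F32 p - F12 p * F31 p ∧
    -(pdt F31 p) + pdx F32 p = δ * (F11 p * F22 p - F12 p * F21 p)

/-- Partial derivative of a function of two real variables with respect to the first variable. -/
noncomputable def d1 (f : ℝ × ℝ → ℝ) (q : ℝ × ℝ) : ℝ := fderiv ℝ f q (1, 0)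

/-- Partial derivative of a function of two real variables with respect to the second variable. -/
noncomputable def d2 (f : ℝ × ℝ → ℝ) (q : ℝ × ℝ) : ℝ := fderiv ℝ f q (0, 1)

/-- The family of systems (40) describes pseudospherical surfaces (`δ = 1`),
resp. spherical surfaces (`δ = −1`). -/
theorem corollary_Ccincoparametros_describes_pss_ss (δ k0 k1 k2 k3 η : ℝ)
    (hδ : δ = 1 ∨ δ = -1) (hk0 : k0 ≠ 0) (hk1 : k1 ≠ 0) (hk2 : k2 ≠ 0) (hη : η ≠ 0)
    (qf : ℝ × ℝ → ℝ) (hqf : ContDiff ℝ (⊤ : ℕ∞) qf)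
    (hW : ∀ w : ℝ × ℝ, k2 * d2 qf w - k1 * d1 qf w ≠ 0)
    (U : Set (ℝ × ℝ)) (hU : IsOpen U)
    (u v : ℝ × ℝ → ℝ)
    (hu : ContDiffOn ℝ (⊤ : ℕ∞) u U) (hv : ContDiffOn ℝ (⊤ : ℕ∞) v U)
    (heq1 : ∀ p ∈ U, pdt (pdx u) p =
      k0 / (k2 * d2 qf (pdx u p, pdx v p) - k1 * d1 qf (pdx u p, pdx v p)) *
        (d2 qf (pdx u p, pdx v p) +
          (k1 * v p + k2 * u p + k3) *
            (δ * k1 * (k1 * pdx v p + k2 * pdx u p)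
              - qf (pdx u p, pdx v p) * d2 qf (pdx u p, pdx v p))))
    (heq2 : ∀ p ∈ U, pdt (pdx v) p =
      -k0 / (k2 * d2 qf (pdx u p, pdx v p) - k1 * d1 qf (pdx u p, pdx v p)) *
        (d1 qf (pdx u p, pdx v p) +
          (k1 * v p + k2 * u p + k3) *
            (δ * k2 * (k1 * pdx v p + k2 * pdx u p)
              - qf (pdx u p, pdx v p) * d1 qf (pdx u p, pdx v p)))) :
    StructEqs δ U
      (fun w => η * (k1 * pdx v w + k2 * pdx u w))
      (fun _ => 0)
      (fun _ => η ^ 2)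
      (fun w => k0 * (k1 * v w + k2 * u w) + k0 * k3)
      (fun w => η * qf (pdx u w, pdx v w))
      (fun _ => k0 / η) := by
  intro p hp
  have hpU : U ∈ nhds p := hU.mem_nhds hp
  have hud : DifferentiableAt ℝ u p := (hu.differentiableOn (by simp)).differentiableAt hpU
  have hvd : DifferentiableAt ℝ v p := (hv.differentiableOn (by simp)).differentiableAt hpU
  have hux : ContDiffOn ℝ (⊤ : ℕ∞) (pdx u) U :=
    (hu.fderiv_of_isOpen hU (by simp)).clm_apply contDiffOn_const
  have hvx : ContDiffOn ℝ (⊤ : ℕ∞) (pdx v) U :=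
    (hv.fderiv_of_isOpen hU (by simp)).clm_apply contDiffOn_const
  have huxd : DifferentiableAt ℝ (pdx u) p := (hux.differentiableOn (by simp)).differentiableAt hpU
  have hvxd : DifferentiableAt ℝ (pdx v) p := (hvx.differentiableOn (by simp)).differentiableAt hpU
  have hWz : k2 * d2 qf (pdx u p, pdx v p) - k1 * d1 qf (pdx u p, pdx v p) ≠ 0 :=
    hW (pdx u p, pdx v p)
  have hqd : DifferentiableAt ℝ qf (pdx u p, pdx v p) :=
    (hqf.differentiable (by simp)).differentiableAt
  have hlin : ∀ a b : ℝ, fderiv ℝ qf (pdx u p, pdx v p) (a, b)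
      = a * d1 qf (pdx u p, pdx v p) + b * d2 qf (pdx u p, pdx v p) := by
    intro a b
    have h : (a, b) = a • ((1:ℝ), (0:ℝ)) + b • ((0:ℝ), (1:ℝ)) := by
      simp [Prod.ext_iff]
    rw [h, map_add, map_smul, map_smul, smul_eq_mul, smul_eq_mul]
    rfl
  have hF11d : fderiv ℝ (fun w => η * (k1 * pdx v w + k2 * pdx u w)) p
      = η • (k1 • fderiv ℝ (pdx v) p + k2 • fderiv ℝ (pdx u) p) := by
    rw [fderiv_const_mul ((hvxd.const_mul k1).fun_add (huxd.const_mul k2)),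
      fderiv_fun_add (hvxd.const_mul k1) (huxd.const_mul k2),
      fderiv_const_mul hvxd, fderiv_const_mul huxd]
  have h11 : pdt (fun w => η * (k1 * pdx v w + k2 * pdx u w)) p
      = η * (k1 * pdt (pdx v) p + k2 * pdt (pdx u) p) := by
    simp only [pdt, hF11d, ContinuousLinearMap.smul_apply, ContinuousLinearMap.add_apply,
      smul_eq_mul]
  have hgF : HasFDerivAt (fun w => (pdx u w, pdx v w))
      ((fderiv ℝ (pdx u) p).prod (fderiv ℝ (pdx v) p)) p :=
    huxd.hasFDerivAt.prodMk hvxd.hasFDerivAt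
  have hcF := hqd.hasFDerivAt.comp p hgF
  have hcd : DifferentiableAt ℝ (fun w => qf (pdx u w, pdx v w)) p := hcF.differentiableAt
  have h31 : pdt (fun w => η * qf (pdx u w, pdx v w)) p
      = η * (pdt (pdx u) p * d1 qf (pdx u p, pdx v p)
          + pdt (pdx v) p * d2 qf (pdx u p, pdx v p)) := by
    have hf := hcF.fderiv
    simp only [pdt]
    rw [fderiv_const_mul hcd]
    simp only [ContinuousLinearMap.smul_apply, smul_eq_mul]
    congr 1
    have h2 : fderiv ℝ (fun w => qf (pdx u w, pdx v w)) p (0, 1)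
        = fderiv ℝ qf (pdx u p, pdx v p) (pdt (pdx u) p, pdt (pdx v) p) := by
      rw [show (fun w => qf (pdx u w, pdx v w))
          = qf ∘ (fun w => (pdx u w, pdx v w)) from rfl, hf]
      rfl
    rw [h2, hlin]
    rfl
  have h22 : pdx (fun w => k0 * (k1 * v w + k2 * u w) + k0 * k3) p
      = k0 * (k1 * pdx v p + k2 * pdx u p) := by
    simp only [pdx]
    rw [fderiv_add_const, fderiv_const_mul ((hvd.const_mul k1).fun_add (hud.const_mul k2)),
      fderiv_fun_add (hvd.const_mul k1) (hud.const_mul k2),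
      fderiv_const_mul hvd, fderiv_const_mul hud]
    simp only [ContinuousLinearMap.smul_apply, ContinuousLinearMap.add_apply, smul_eq_mul]
  have hc0 : ∀ c : ℝ, pdx (fun _ : ℝ × ℝ => c) p = 0 := by intro c; simp [pdx]
  have hc0t : ∀ c : ℝ, pdt (fun _ : ℝ × ℝ => c) p = 0 := by intro c; simp [pdt]
  refine ⟨?_, ?_, ?_⟩
  · beta_reduce
    rw [h11, hc0, heq1 p hp, heq2 p hp]
    field_simp
    ring
  · beta_reduce
    rw [hc0t, h22]
    field_simp
    ring
  · beta_reduce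
    rw [h31, hc0, heq1 p hp, heq2 p hp]
    field_simp
    ring
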